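/- For qubit states ρ₀ = I/2 and ρ₁ = |0⟩⟨0|, and any two qubit channels Λ₁, Λ₂, the channels Λ'_j(ρ) := Σ_{i=0}^{1} ⟨i|ρ|i⟩ Λ_j(|i⟩⟨i|) satisfy Λ'_j(ρ) = Λ_j(ρ) for ρ ∈ {I/2, |0⟩⟨0|}, and the channel Λ(ρ) := Σ_{i=0}^{1} ⟨i|ρ|i⟩ Λ₁(|i⟩⟨i|) ⊗ Λ₂(|i⟩⟨i|) is a joint channel with tr₂ Λ(ρ) = Λ'₁(ρ) and tr₁ Λ(ρ) = Λ'₂(ρ) for all states ρ. Hence any pair of qubit channels is {I/2, |0⟩⟨0|}-compatible. -/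

import Mathlib

open Matrix Kronecker ComplexOrder

noncomputable section

abbrev Mat2 := Matrix (Fin 2) (Fin 2) ℂ

def IsState {n : Type*} [Fintype n] [DecidableEq n] (ρ : Matrix n n ℂ) : Prop :=
  ρ.PosSemidef ∧ ρ.trace = 1

/-- Partial trace over the second qubit. -/
def ptr2 (M : Matrix (Fin 2 × Fin 2) (Fin 2 × Fin 2) ℂ) : Mat2 :=
  Matrix.of fun i j => ∑ k, M (i, k) (j, k)

/-- Partial trace over the first qubit. -/
def ptr1 (M : Matrix (Fin 2 × Fin 2) (Fin 2 × Fin 2) ℂ) : Mat2 :=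
  Matrix.of fun i j => ∑ k, M (k, i) (k, j)

/-- The projection `|i⟩⟨i|`. -/
def proj (i : Fin 2) : Mat2 := Matrix.single i i (1 : ℂ)

lemma proj_apply (i j k : Fin 2) : proj i j k = if j = i ∧ k = i then 1 else 0 := by
  simp [proj, Matrix.single, and_comm, eq_comm]

lemma lam_proj_apply {r : ℕ} (K : Fin r → Mat2) (i p q : Fin 2) :
    (∑ a, K a * proj i * (K a)ᴴ) p q = ∑ a, K a p i * (starRingEnd ℂ) (K a q i) := by
  simp only [Matrix.sum_apply, Matrix.mul_apply, proj_apply, Matrix.conjTranspose_apply,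
    mul_ite, ite_mul, mul_one, mul_zero, zero_mul, one_mul]
  refine Finset.sum_congr rfl fun a _ => ?_
  simp [Fin.sum_univ_two, Fin.ext_iff]
  fin_cases i <;> simp

lemma hk_diag {r : ℕ} (K : Fin r → Mat2) (hK : ∑ a, (K a)ᴴ * K a = 1) (i : Fin 2) :
    ∑ a, ∑ b, (starRingEnd ℂ) (K a b i) * K a b i = 1 := by
  have h := congrArg (fun M : Mat2 => M i i) hK
  simpa [Matrix.sum_apply, Matrix.mul_apply, Matrix.conjTranspose_apply, Matrix.one_apply] using h

lemma lam_proj_trace {r : ℕ} (K : Fin r → Mat2) (hK : ∑ a, (K a)ᴴ * K a = 1) (i : Fin 2) :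
    ∑ b : Fin 2, (∑ a, K a * proj i * (K a)ᴴ) b b = 1 := by
  have h := hk_diag K hK i
  rw [← h, Finset.sum_comm]
  refine Finset.sum_congr rfl fun a _ => ?_
  rw [lam_proj_apply]
  exact Finset.sum_congr rfl fun b _ => mul_comm _ _

lemma one_eq_proj : (1 : Mat2) = proj 0 + proj 1 := by
  ext i j
  fin_cases i <;> fin_cases j <;> simp [proj_apply, Matrix.one_apply]

def bigL {r₁ r₂ : ℕ} (K₁ : Fin r₁ → Mat2) (K₂ : Fin r₂ → Mat2)
    (t : (Fin r₁ × Fin r₂) × Fin 2) : Matrix (Fin 2 × Fin 2) (Fin 2) ℂ :=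
  Matrix.of fun p l => (K₁ t.1.1 p.1 t.2 * K₂ t.1.2 p.2 t.2) * (if l = t.2 then 1 else 0)

lemma bigLH_mul {r₁ r₂ : ℕ} (K₁ : Fin r₁ → Mat2) (K₂ : Fin r₂ → Mat2)
    (t : (Fin r₁ × Fin r₂) × Fin 2) :
    (bigL K₁ K₂ t)ᴴ * bigL K₁ K₂ t =
      ((∑ j, (starRingEnd ℂ) (K₁ t.1.1 j t.2) * K₁ t.1.1 j t.2) *
       (∑ k, (starRingEnd ℂ) (K₂ t.1.2 k t.2) * K₂ t.1.2 k t.2)) • proj t.2 := by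
  ext l m
  simp only [Matrix.mul_apply, Matrix.conjTranspose_apply, bigL, Matrix.of_apply,
    Matrix.smul_apply, proj_apply, smul_eq_mul, Fintype.sum_prod_type, Finset.sum_mul_sum]
  by_cases hl : l = t.2 <;> by_cases hm : m = t.2 <;>
    simp [hl, hm, Finset.mul_sum, _root_.map_mul, Complex.star_def] <;>
    ring

lemma bigL_conj {r₁ r₂ : ℕ} (K₁ : Fin r₁ → Mat2) (K₂ : Fin r₂ → Mat2)
    (t : (Fin r₁ × Fin r₂) × Fin 2) (ρ : Mat2) :
    bigL K₁ K₂ t * ρ * (bigL K₁ K₂ t)ᴴ =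
      Matrix.of fun p q : Fin 2 × Fin 2 =>
        ρ t.2 t.2 * ((K₁ t.1.1 p.1 t.2 * (starRingEnd ℂ) (K₁ t.1.1 q.1 t.2)) *
          (K₂ t.1.2 p.2 t.2 * (starRingEnd ℂ) (K₂ t.1.2 q.2 t.2))) := by
  ext p q
  simp only [Matrix.mul_apply, Matrix.conjTranspose_apply, bigL, Matrix.of_apply,
    Complex.star_def, _root_.map_mul, apply_ite (starRingEnd ℂ), _root_.map_one, _root_.map_zero,
    mul_ite, ite_mul, mul_one, mul_zero, zero_mul, one_mul,
    Finset.sum_ite_eq', Finset.mem_univ, if_true]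
  ring

theorem qubit_channels_two_state_compatible
    {r₁ r₂ : ℕ} (K₁ : Fin r₁ → Mat2) (K₂ : Fin r₂ → Mat2)
    (hK₁ : ∑ i, (K₁ i)ᴴ * K₁ i = 1) (hK₂ : ∑ i, (K₂ i)ᴴ * K₂ i = 1) :
    let Λ₁ : Mat2 → Mat2 := fun ρ => ∑ i, K₁ i * ρ * (K₁ i)ᴴ
    let Λ₂ : Mat2 → Mat2 := fun ρ => ∑ i, K₂ i * ρ * (K₂ i)ᴴ
    let Λ'₁ : Mat2 → Mat2 := fun ρ => ∑ i : Fin 2, (ρ i i) • Λ₁ (proj i)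
    let Λ'₂ : Mat2 → Mat2 := fun ρ => ∑ i : Fin 2, (ρ i i) • Λ₂ (proj i)
    let Λ : Mat2 → Matrix (Fin 2 × Fin 2) (Fin 2 × Fin 2) ℂ :=
      fun ρ => ∑ i : Fin 2, (ρ i i) • (Λ₁ (proj i) ⊗ₖ Λ₂ (proj i))
    (∀ ρ ∈ ({((1 : ℂ)/2) • (1 : Mat2), proj 0} : Set Mat2),
        Λ'₁ ρ = Λ₁ ρ ∧ Λ'₂ ρ = Λ₂ ρ) ∧
    (∀ ρ : Mat2, ptr2 (Λ ρ) = Λ'₁ ρ ∧ ptr1 (Λ ρ) = Λ'₂ ρ) ∧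
    (∃ (r : ℕ) (L : Fin r → Matrix (Fin 2 × Fin 2) (Fin 2) ℂ),
      (∑ i, (L i)ᴴ * L i = 1) ∧ ∀ ρ : Mat2, ∑ i, L i * ρ * (L i)ᴴ = Λ ρ) := by
  intro Λ₁ Λ₂ Λ'₁ Λ'₂ Λ
  have agree : ∀ {r : ℕ} (K : Fin r → Mat2), (∑ a, (K a)ᴴ * K a = 1) →
      ∀ ρ ∈ ({((1 : ℂ)/2) • (1 : Mat2), proj 0} : Set Mat2),
      (∑ i : Fin 2, (ρ i i) • (∑ a, K a * proj i * (K a)ᴴ)) = ∑ a, K a * ρ * (K a)ᴴ := by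
    rintro r K hK ρ (rfl | rfl)
    · simp only [Fin.sum_univ_two, Matrix.smul_apply, Matrix.one_apply_eq, smul_eq_mul, mul_one]
      conv_rhs => rw [one_eq_proj]
      simp only [smul_add, Matrix.mul_smul, Matrix.smul_mul, mul_add, add_mul,
        Finset.sum_add_distrib, Finset.smul_sum]
    · simp [Fin.sum_univ_two, proj_apply]
  refine ⟨fun ρ hρ => ⟨agree K₁ hK₁ ρ hρ, agree K₂ hK₂ ρ hρ⟩, ?_, ?_⟩
  · intro ρ
    have tr1 : ∀ i' : Fin 2, ∑ k : Fin 2, Λ₁ (proj i') k k = 1 :=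
      fun i' => lam_proj_trace K₁ hK₁ i'
    have tr2 : ∀ i' : Fin 2, ∑ k : Fin 2, Λ₂ (proj i') k k = 1 :=
      fun i' => lam_proj_trace K₂ hK₂ i'
    constructor
    · show ptr2 (∑ i' : Fin 2, ρ i' i' • (Λ₁ (proj i') ⊗ₖ Λ₂ (proj i'))) =
        ∑ i' : Fin 2, ρ i' i' • Λ₁ (proj i')
      ext i j
      simp only [ptr2, Matrix.of_apply, Matrix.sum_apply, Matrix.smul_apply,
        Matrix.kroneckerMap_apply, smul_eq_mul]
      rw [Finset.sum_comm]
      refine Finset.sum_congr rfl fun i' _ => ?_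
      rw [← Finset.mul_sum, ← Finset.mul_sum, tr2 i', mul_one]
    · show ptr1 (∑ i' : Fin 2, ρ i' i' • (Λ₁ (proj i') ⊗ₖ Λ₂ (proj i'))) =
        ∑ i' : Fin 2, ρ i' i' • Λ₂ (proj i')
      ext i j
      simp only [ptr1, Matrix.of_apply, Matrix.sum_apply, Matrix.smul_apply,
        Matrix.kroneckerMap_apply, smul_eq_mul]
      rw [Finset.sum_comm]
      refine Finset.sum_congr rfl fun i' _ => ?_
      rw [← Finset.mul_sum]
      congr 1
      rw [← Finset.sum_mul, tr1 i', one_mul]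
  · refine ⟨r₁ * r₂ * 2, fun t => bigL K₁ K₂
      (((Equiv.prodCongr (finProdFinEquiv (m := r₁) (n := r₂)) (Equiv.refl (Fin 2))).trans
        finProdFinEquiv).symm t), ?_, ?_⟩
    · set e := ((Equiv.prodCongr (finProdFinEquiv (m := r₁) (n := r₂)) (Equiv.refl (Fin 2))).trans
        finProdFinEquiv) with he
      rw [Equiv.sum_comp e.symm (fun t => (bigL K₁ K₂ t)ᴴ * bigL K₁ K₂ t)]
      calc ∑ t : (Fin r₁ × Fin r₂) × Fin 2, (bigL K₁ K₂ t)ᴴ * bigL K₁ K₂ t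
          = ∑ t : (Fin r₁ × Fin r₂) × Fin 2,
              ((∑ j, (starRingEnd ℂ) (K₁ t.1.1 j t.2) * K₁ t.1.1 j t.2) *
               (∑ k, (starRingEnd ℂ) (K₂ t.1.2 k t.2) * K₂ t.1.2 k t.2)) • proj t.2 :=
            Finset.sum_congr rfl fun t _ => bigLH_mul K₁ K₂ t
        _ = ∑ i : Fin 2, ((∑ a, ∑ j, (starRingEnd ℂ) (K₁ a j i) * K₁ a j i) *
              (∑ b, ∑ k, (starRingEnd ℂ) (K₂ b k i) * K₂ b k i)) • proj i := by
            rw [Fintype.sum_prod_type, Finset.sum_comm]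
            refine Finset.sum_congr rfl fun i _ => ?_
            rw [Fintype.sum_prod_type]
            simp only [← Finset.sum_smul, Finset.sum_mul_sum]
        _ = 1 := by
            simp only [fun i => hk_diag K₁ hK₁ i, fun i => hk_diag K₂ hK₂ i, one_mul, one_smul]
            rw [Fin.sum_univ_two, ← one_eq_proj]
    · intro ρ
      set e := ((Equiv.prodCongr (finProdFinEquiv (m := r₁) (n := r₂)) (Equiv.refl (Fin 2))).trans
        finProdFinEquiv) with he
      rw [Equiv.sum_comp e.symm (fun t => bigL K₁ K₂ t * ρ * (bigL K₁ K₂ t)ᴴ)]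
      show (∑ t : (Fin r₁ × Fin r₂) × Fin 2, bigL K₁ K₂ t * ρ * (bigL K₁ K₂ t)ᴴ)
          = ∑ i : Fin 2, (ρ i i) • (Λ₁ (proj i) ⊗ₖ Λ₂ (proj i))
      ext p q
      simp only [Matrix.sum_apply, bigL_conj, Matrix.of_apply, Matrix.smul_apply,
        Matrix.kroneckerMap_apply, smul_eq_mul, Fintype.sum_prod_type]
      conv_lhs => enter [2, a]; rw [Finset.sum_comm]
      rw [Finset.sum_comm]
      refine Finset.sum_congr rfl fun i _ => ?_
      have h1 : Λ₁ (proj i) p.1 q.1 = ∑ a, K₁ a p.1 i * (starRingEnd ℂ) (K₁ a q.1 i) :=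
        lam_proj_apply K₁ i p.1 q.1
      have h2 : Λ₂ (proj i) p.2 q.2 = ∑ b, K₂ b p.2 i * (starRingEnd ℂ) (K₂ b q.2 i) :=
        lam_proj_apply K₂ i p.2 q.2
      rw [h1, h2, Finset.sum_mul_sum]
      simp only [Finset.mul_sum]
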